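/- Let G be a graph and let X, Y ⊆ V(G) be vertex subsets. If S ⊆ Y is an important (X,Y)-separator, then for every set Y' satisfying S ⊆ Y' ⊆ Y, the set S is an important (X,Y')-separator. -/

import Mathlib

set_option maxHeartbeats 1000000

variable {V : Type}

/-- The graph obtained from `G` by deleting the vertex set `S`
(deleted vertices are kept as isolated vertices). -/
def gdelete (G : SimpleGraph V) (S : Set V) : SimpleGraph V where
  Adj u v := G.Adj u v ∧ u ∉ S ∧ v ∉ S
  symm := by constructor; intro u v h; exact ⟨h.1.symm, h.2.2, h.2.1⟩
  loopless := by constructor; intro v h; exact G.loopless.irrefl v h.1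

/-- `R_G(X, S)`: the set of vertices reachable from `X \ S` in `G − S`. -/
def greach (G : SimpleGraph V) (X S : Set V) : Set V :=
  {v | v ∉ S ∧ ∃ x ∈ X \ S, (gdelete G S).Reachable x v}

/-- `S` is an `(X,Y)`-separator: no vertex of `Y` is reachable from `X \ S` in `G − S`. -/
def IsSep (G : SimpleGraph V) (X Y S : Set V) : Prop := Y ∩ greach G X S = ∅

/-- A minimal `(X,Y)`-separator: none of its proper subsets is an `(X,Y)`-separator. -/
def IsMinSep (G : SimpleGraph V) (X Y S : Set V) : Prop :=
  IsSep G X Y S ∧ ∀ S' ⊂ S, ¬ IsSep G X Y S'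

/-- `S'` dominates `S`: `|S'| ≤ |S|` and `R_G(X, S) ⊊ R_G(X, S')`. -/
def SepDominates (G : SimpleGraph V) (X S' S : Set V) : Prop :=
  S'.ncard ≤ S.ncard ∧ greach G X S ⊂ greach G X S'

/-- An important `(X,Y)`-separator: minimal and dominated by no `(X,Y)`-separator. -/
def IsImpSep (G : SimpleGraph V) (X Y S : Set V) : Prop :=
  IsMinSep G X Y S ∧ ¬ ∃ S', IsSep G X Y S' ∧ SepDominates G X S' S

lemma greach_adj {G : SimpleGraph V} {X T : Set V} {v u : V}
    (hv : v ∈ greach G X T) (h : (gdelete G T).Adj v u) : u ∈ greach G X T := by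
  obtain ⟨hvT, x, hx, hr⟩ := hv
  exact ⟨h.2.2, x, hx, hr.trans ⟨SimpleGraph.Walk.cons h .nil⟩⟩

lemma walk_hit {G : SimpleGraph V} {X T S : Set V} {x y : V}
    (w : (gdelete G T).Walk x y) (hx1 : x ∈ greach G X T) (hx2 : x ∈ greach G X S) :
    (∃ s ∈ S, s ∈ greach G X T) ∨ (y ∈ greach G X S ∧ y ∈ greach G X T) := by
  induction w with
  | nil => exact Or.inr ⟨hx2, hx1⟩
  | @cons a u y h w ih =>
    have hu1 : u ∈ greach G X T := greach_adj hx1 h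
    by_cases hus : u ∈ S
    · exact Or.inl ⟨u, hus, hu1⟩
    · exact ih hu1 (greach_adj hx2 ⟨h.1, hx2.1, hus⟩)

lemma sep_hit {G : SimpleGraph V} {X Y S T : Set V} (hsep : IsSep G X Y S) {y : V}
    (hy : y ∈ Y) (hyg : y ∈ greach G X T) : ∃ s ∈ S, s ∈ greach G X T := by
  obtain ⟨hyT, x, hx, hr⟩ := hyg
  by_cases hxs : x ∈ S
  · exact ⟨x, hxs, hx.2, x, hx, .refl _⟩
  · obtain ⟨w⟩ := hr
    rcases walk_hit w ⟨hx.2, x, hx, .refl _⟩ ⟨hxs, x, ⟨hx.1, hxs⟩, .refl _⟩ with h | h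
    · exact h
    · exfalso
      have : y ∈ Y ∩ greach G X S := ⟨hy, h.1⟩
      rw [IsSep] at hsep
      simp [hsep] at this

/-- if `S ⊆ Y` is an important `(X,Y)`-separator then for every `Y'`
with `S ⊆ Y' ⊆ Y`, the set `S` is an important `(X,Y')`-separator. -/
theorem stmt10 [Fintype V] (G : SimpleGraph V) (X Y S : Set V)
    (hSY : S ⊆ Y) (hS : IsImpSep G X Y S) :
    ∀ Y' : Set V, S ⊆ Y' → Y' ⊆ Y → IsImpSep G X Y' S := by
  intro Y' hSY' hY'Y
  obtain ⟨⟨hsep, hmin⟩, himp⟩ := hS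
  refine ⟨⟨?_, ?_⟩, ?_⟩
  · rw [IsSep, Set.eq_empty_iff_forall_notMem]
    intro v ⟨hv1, hv2⟩
    have : v ∈ Y ∩ greach G X S := ⟨hY'Y hv1, hv2⟩
    rw [IsSep] at hsep; simp [hsep] at this
  · intro S' hsub hsep'
    have hns := hmin S' hsub
    rw [IsSep, ← Ne, ← Set.nonempty_iff_ne_empty] at hns
    obtain ⟨y, hy1, hy2⟩ := hns
    obtain ⟨s, hs1, hs2⟩ := sep_hit hsep hy1 hy2
    have : s ∈ Y' ∩ greach G X S' := ⟨hSY' hs1, hs2⟩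
    rw [IsSep] at hsep'; simp [hsep'] at this
  · rintro ⟨S'', hsep'', hdom⟩
    apply himp
    refine ⟨S'', ?_, hdom⟩
    rw [IsSep, Set.eq_empty_iff_forall_notMem]
    intro y ⟨hy1, hy2⟩
    obtain ⟨s, hs1, hs2⟩ := sep_hit hsep hy1 hy2
    have : s ∈ Y' ∩ greach G X S'' := ⟨hSY' hs1, hs2⟩
    rw [IsSep] at hsep''; simp [hsep''] at this
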